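/- arXiv:2512.06505 — 6 statements merged into one kernel-verified Lean document; each statement's English description precedes it below -/
import Mathlib

section
/- For S₀ in the continuation region (0 < S₀ ≤ S̄_C), the AmPO call premium C₀ is nonincreasing in the amortization rate q; specifically, ∂C₀/∂q = (C₀/(σ² ᾱ))·log((α_C−1)S₀/(α_C K)) ≤ 0. -/
/-- For 0 < S₀ ≤ S̄_C, the AmPO call premium C₀ is nonincreasing in the
amortization rate q: ∂C₀/∂q = (C₀/(σ² ᾱ))·log((α_C−1)S₀/(α_C K)) ≤ 0. -/
theorem ampo_call_premium_deriv_q (r σ q K S₀ : ℝ) (hr : 0 ≤ r) (hσ : 0 < σ) (hq : 0 < q)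
    (hK : 0 < K) (hS₀ : 0 < S₀)
    (αC : ℝ → ℝ)
    (hαC : ∀ q' : ℝ, αC q' =
      Real.sqrt ((r / σ ^ 2 + 1 / 2) ^ 2 + 2 * (r + q') / σ ^ 2) - r / σ ^ 2 + 1 / 2)
    (ᾱ : ℝ) (hᾱ : ᾱ = Real.sqrt ((r / σ ^ 2 + 1 / 2) ^ 2 + 2 * (r + q) / σ ^ 2))
    (C₀ : ℝ → ℝ)
    (hC₀ : ∀ q' : ℝ, C₀ q' = K / (αC q' - 1) * ((αC q' - 1) * S₀ / (αC q' * K)) ^ (αC q'))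
    (hcont : S₀ ≤ αC q * K / (αC q - 1)) :
    HasDerivAt C₀ (C₀ q / (σ ^ 2 * ᾱ) * Real.log ((αC q - 1) * S₀ / (αC q * K))) q ∧
      C₀ q / (σ ^ 2 * ᾱ) * Real.log ((αC q - 1) * S₀ / (αC q * K)) ≤ 0 := by
  have hσ2 : (0:ℝ) < σ ^ 2 := by positivity
  have hApos : (0:ℝ) < r / σ ^ 2 + 1 / 2 := by positivity
  set A : ℝ := r / σ ^ 2 + 1 / 2 with hAdef
  have hD : A ^ 2 < A ^ 2 + 2 * (r + q) / σ ^ 2 := by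
    have : 0 < 2 * (r + q) / σ ^ 2 := by positivity
    linarith
  have hDpos : (0:ℝ) < A ^ 2 + 2 * (r + q) / σ ^ 2 := by positivity
  have hᾱA : A < ᾱ := by
    rw [hᾱ]
    calc A = Real.sqrt (A ^ 2) := by rw [Real.sqrt_sq hApos.le]
    _ < _ := Real.sqrt_lt_sqrt (sq_nonneg A) hD
  have hᾱpos : 0 < ᾱ := hApos.trans hᾱA
  set α : ℝ := αC q with hαdef
  have hαval : α = ᾱ - A + 1 := by rw [hαdef, hαC, hᾱ, hAdef]; ring
  have hα1 : 1 < α := by rw [hαval]; linarith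
  have hα0 : 0 < α := by linarith
  set u : ℝ := (α - 1) * S₀ / (α * K) with hu
  have hupos : 0 < u := by
    apply div_pos (mul_pos (by linarith) hS₀) (mul_pos hα0 hK)
  have hule : u ≤ 1 := by
    rw [hu, div_le_one (mul_pos hα0 hK)]
    calc (α - 1) * S₀ ≤ (α - 1) * (α * K / (α - 1)) := by
          apply mul_le_mul_of_nonneg_left hcont (by linarith)
    _ = α * K := by
          field_simp
          exact div_self (by linarith : α - 1 ≠ 0)
  -- derivative of the inner α function
  have hg : HasDerivAt (fun q' : ℝ =>
      Real.sqrt ((r / σ ^ 2 + 1 / 2) ^ 2 + 2 * (r + q') / σ ^ 2) - r / σ ^ 2 + 1 / 2)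
      (1 / (σ ^ 2 * ᾱ)) q := by
    have h1 : HasDerivAt (fun q' : ℝ => (r / σ ^ 2 + 1 / 2) ^ 2 + 2 * (r + q') / σ ^ 2)
        (2 / σ ^ 2) q := by
      have := ((((hasDerivAt_id q).const_add r).const_mul 2).div_const (σ ^ 2)).const_add
        ((r / σ ^ 2 + 1 / 2) ^ 2)
      simpa using this
    have h2 := (h1.sqrt (ne_of_gt hDpos)).sub_const (r / σ ^ 2)
    have h3 := h2.add_const (1 / 2)
    refine h3.congr_deriv ?_
    rw [← hᾱ]
    field_simp
  have hgq : (Real.sqrt ((r / σ ^ 2 + 1 / 2) ^ 2 + 2 * (r + q) / σ ^ 2) - r / σ ^ 2 + 1 / 2) = α := by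
    rw [hαdef, hαC]
  -- rewrite C₀ as explicit function
  have hCfun : C₀ = fun q' : ℝ =>
      K / ((Real.sqrt ((r / σ ^ 2 + 1 / 2) ^ 2 + 2 * (r + q') / σ ^ 2) - r / σ ^ 2 + 1 / 2) - 1) *
      (((Real.sqrt ((r / σ ^ 2 + 1 / 2) ^ 2 + 2 * (r + q') / σ ^ 2) - r / σ ^ 2 + 1 / 2) - 1) * S₀ /
        ((Real.sqrt ((r / σ ^ 2 + 1 / 2) ^ 2 + 2 * (r + q') / σ ^ 2) - r / σ ^ 2 + 1 / 2) * K)) ^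
        (Real.sqrt ((r / σ ^ 2 + 1 / 2) ^ 2 + 2 * (r + q') / σ ^ 2) - r / σ ^ 2 + 1 / 2) := by
    funext q'
    rw [hC₀ q', hαC q']
  set α' : ℝ := 1 / (σ ^ 2 * ᾱ) with hα'
  have hα'pos : 0 < α' := by positivity
  -- build the full derivative
  have hnum : HasDerivAt (fun q' : ℝ =>
      ((Real.sqrt ((r / σ ^ 2 + 1 / 2) ^ 2 + 2 * (r + q') / σ ^ 2) - r / σ ^ 2 + 1 / 2) - 1) * S₀)
      (α' * S₀) q := (hg.sub_const 1).mul_const S₀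
  have hden : HasDerivAt (fun q' : ℝ =>
      (Real.sqrt ((r / σ ^ 2 + 1 / 2) ^ 2 + 2 * (r + q') / σ ^ 2) - r / σ ^ 2 + 1 / 2) * K)
      (α' * K) q := hg.mul_const K
  have hdenq : (Real.sqrt ((r / σ ^ 2 + 1 / 2) ^ 2 + 2 * (r + q) / σ ^ 2) - r / σ ^ 2 + 1 / 2) * K ≠ 0 := by
    rw [hgq]; exact ne_of_gt (mul_pos hα0 hK)
  have hufun := hnum.div hden hdenq
  have hvfun := hufun.rpow hg (by simp only [Pi.div_apply, hgq]; exact hupos)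
  have hKdiv : HasDerivAt (fun q' : ℝ =>
      K / ((Real.sqrt ((r / σ ^ 2 + 1 / 2) ^ 2 + 2 * (r + q') / σ ^ 2) - r / σ ^ 2 + 1 / 2) - 1))
      ((0 * ((Real.sqrt ((r / σ ^ 2 + 1 / 2) ^ 2 + 2 * (r + q) / σ ^ 2) - r / σ ^ 2 + 1 / 2) - 1)
        - K * α') /
        ((Real.sqrt ((r / σ ^ 2 + 1 / 2) ^ 2 + 2 * (r + q) / σ ^ 2) - r / σ ^ 2 + 1 / 2) - 1) ^ 2) q := by
    exact (hasDerivAt_const q K).div (hg.sub_const 1) (by rw [hgq]; linarith)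
  have hbig := hKdiv.mul hvfun
  rw [hC₀ q, ← hαdef, ← hu]
  rw [hCfun]
  constructor
  · refine hbig.congr_deriv ?_
    simp only [Pi.div_apply, hgq, ← hu]
    have hαne : α ≠ 0 := ne_of_gt hα0
    have hα1ne : α - 1 ≠ 0 := by linarith
    have hKne : K ≠ 0 := ne_of_gt hK
    have hrpow : u ^ (α - 1) = u ^ α / u := by
      rw [Real.rpow_sub hupos, Real.rpow_one]
    rw [hrpow, hα']
    have hune : u ≠ 0 := ne_of_gt hupos
    have hσᾱ : σ ^ 2 * ᾱ ≠ 0 := ne_of_gt (by positivity)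
    field_simp
    rw [hu]
    field_simp
    ring
  · apply mul_nonpos_of_nonneg_of_nonpos
    · apply div_nonneg _ (by positivity)
      exact mul_nonneg (div_nonneg hK.le (by linarith)) (Real.rpow_nonneg hupos.le α)
    · exact Real.log_nonpos hupos.le hule
end

section
/- For S₀ ≥ S̄_P, the AmPO put premium P₀ is nonincreasing in the amortization rate q; specifically, ∂P₀/∂q = −(P₀/(σ² ᾱ))·log((1+α_P)S₀/(α_P K)) ≤ 0. -/
/-- For S₀ ≥ S̄_P, the AmPO put premium P₀ is nonincreasing in the
amortization rate q: ∂P₀/∂q = −(P₀/(σ² ᾱ))·log((1+α_P)S₀/(α_P K)) ≤ 0. -/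
theorem ampo_put_premium_deriv_q (r σ q K S₀ : ℝ) (hr : 0 ≤ r) (hσ : 0 < σ) (hq : 0 < q)
    (hK : 0 < K) (hS₀ : 0 < S₀)
    (αP : ℝ → ℝ)
    (hαP : ∀ q' : ℝ, αP q' =
      Real.sqrt ((r / σ ^ 2 + 1 / 2) ^ 2 + 2 * (r + q') / σ ^ 2) + r / σ ^ 2 - 1 / 2)
    (ᾱ : ℝ) (hᾱ : ᾱ = Real.sqrt ((r / σ ^ 2 + 1 / 2) ^ 2 + 2 * (r + q) / σ ^ 2))
    (P₀ : ℝ → ℝ)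
    (hP₀ : ∀ q' : ℝ, P₀ q' = K / (1 + αP q') * (αP q' * K / ((1 + αP q') * S₀)) ^ (αP q'))
    (hcont : αP q * K / (1 + αP q) ≤ S₀) :
    HasDerivAt P₀ (-(P₀ q / (σ ^ 2 * ᾱ)) * Real.log ((1 + αP q) * S₀ / (αP q * K))) q ∧
      -(P₀ q / (σ ^ 2 * ᾱ)) * Real.log ((1 + αP q) * S₀ / (αP q * K)) ≤ 0 := by
  have hσ2 : (0:ℝ) < σ ^ 2 := by positivity
  have hrq : (0:ℝ) < r + q := by linarith
  have hu : 0 < (r / σ ^ 2 + 1 / 2) ^ 2 + 2 * (r + q) / σ ^ 2 := by positivity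
  have ht : 0 ≤ r / σ ^ 2 := div_nonneg hr hσ2.le
  have h1 : (1 / 2 - r / σ ^ 2) ^ 2 < (r / σ ^ 2 + 1 / 2) ^ 2 + 2 * (r + q) / σ ^ 2 := by
    have h2 : 0 < 2 * (r + q) / σ ^ 2 := by positivity
    nlinarith
  have hsgt : (1 / 2 : ℝ) - r / σ ^ 2 <
      Real.sqrt ((r / σ ^ 2 + 1 / 2) ^ 2 + 2 * (r + q) / σ ^ 2) := by
    calc (1 / 2 : ℝ) - r / σ ^ 2 ≤ |1 / 2 - r / σ ^ 2| := le_abs_self _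
    _ = Real.sqrt ((1 / 2 - r / σ ^ 2) ^ 2) := (Real.sqrt_sq_eq_abs _).symm
    _ < _ := Real.sqrt_lt_sqrt (sq_nonneg _) h1
  have hApos : 0 < αP q := by rw [hαP]; linarith
  have hA1 : 0 < 1 + αP q := by linarith
  have hBpos : 0 < αP q * K / ((1 + αP q) * S₀) := by positivity
  have hPpos : 0 < P₀ q := by rw [hP₀]; positivity
  have hᾱpos : 0 < ᾱ := hᾱ ▸ Real.sqrt_pos.2 hu
  have hlogpos : 0 ≤ Real.log ((1 + αP q) * S₀ / (αP q * K)) := by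
    apply Real.log_nonneg
    rw [le_div_iff₀ (by positivity)]
    calc (1:ℝ) * (αP q * K) = αP q * K := one_mul _
    _ ≤ (1 + αP q) * S₀ := by
        rw [div_le_iff₀ hA1] at hcont; linarith [hcont]
  refine ⟨?_, mul_nonpos_of_nonpos_of_nonneg (neg_nonpos.2 (by positivity)) hlogpos⟩
  -- replace the abstract functions by explicit ones
  have hαPfun : αP = fun q' => Real.sqrt ((r / σ ^ 2 + 1 / 2) ^ 2 + 2 * (r + q') / σ ^ 2)
      + r / σ ^ 2 - 1 / 2 := funext hαP
  have hP₀fun : P₀ = fun q' =>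
      K / (1 + αP q') * (αP q' * K / ((1 + αP q') * S₀)) ^ (αP q') := funext hP₀
  -- derivative of the inside of the sqrt
  have h0 : HasDerivAt (fun q' : ℝ => (r / σ ^ 2 + 1 / 2) ^ 2 + 2 * (r + q') / σ ^ 2)
      (2 * 1 / σ ^ 2) q :=
    ((((hasDerivAt_id q).const_add r).const_mul 2).div_const (σ ^ 2)).const_add _
  have hsq : HasDerivAt
      (fun q' : ℝ => Real.sqrt ((r / σ ^ 2 + 1 / 2) ^ 2 + 2 * (r + q') / σ ^ 2))
      (1 / (2 * Real.sqrt ((r / σ ^ 2 + 1 / 2) ^ 2 + 2 * (r + q) / σ ^ 2)) *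
        (2 * 1 / σ ^ 2)) q := (Real.hasDerivAt_sqrt hu.ne').comp q h0
  set a' : ℝ := 1 / (2 * Real.sqrt ((r / σ ^ 2 + 1 / 2) ^ 2 + 2 * (r + q) / σ ^ 2)) *
      (2 * 1 / σ ^ 2) with ha'
  have hA : HasDerivAt αP a' q := by
    rw [hαPfun]; exact (hsq.add_const (r / σ ^ 2)).sub_const (1 / 2)
  have hD1 : HasDerivAt (fun q' => 1 + αP q') a' q := hA.const_add 1
  have hNum : HasDerivAt (fun q' => αP q' * K) (a' * K) q := hA.mul_const K
  have hDen : HasDerivAt (fun q' => (1 + αP q') * S₀) (a' * S₀) q := hD1.mul_const S₀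
  have hDenne : (1 + αP q) * S₀ ≠ 0 := by positivity
  have hB : HasDerivAt (fun q' => αP q' * K / ((1 + αP q') * S₀))
      ((a' * K * ((1 + αP q) * S₀) - αP q * K * (a' * S₀)) / ((1 + αP q) * S₀) ^ 2) q :=
    hNum.div hDen hDenne
  have hG := hB.rpow hA hBpos
  have hF : HasDerivAt (fun q' => K / (1 + αP q'))
      ((0 * (1 + αP q) - K * a') / (1 + αP q) ^ 2) q :=
    (hasDerivAt_const q K).div hD1 hA1.ne'
  have hP := hF.mul hG
  rw [hP₀fun]
  convert hP using 1
  -- now the algebra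
  case e'_4 => rfl
  case e'_5 => rfl
  case e'_8 => rfl
  simp only
  rw [hᾱ]
  set s : ℝ := Real.sqrt ((r / σ ^ 2 + 1 / 2) ^ 2 + 2 * (r + q) / σ ^ 2) with hs
  set A : ℝ := αP q with hAdef
  set B : ℝ := A * K / ((1 + A) * S₀) with hBdef
  have hBA : B ^ A = B ^ (A - 1) * B := by
    rw [← Real.rpow_add_one hBpos.ne' (A - 1), sub_add_cancel]
  have hlog : Real.log ((1 + A) * S₀ / (A * K)) = -Real.log B := by
    rw [show (1 + A) * S₀ / (A * K) = B⁻¹ from (inv_div _ _).symm, Real.log_inv]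
  have hspos : 0 < s := Real.sqrt_pos.2 hu
  have hsne : s ≠ 0 := hspos.ne'
  clear_value s A B
  rw [hlog, hBA, ha', hBdef]
  field_simp
  ring
end

section
/- The call exercise boundary S̄_C(q) = α_C(q)K/(α_C(q)−1) is strictly decreasing in q with derivative ∂S̄_C/∂q = −K/(σ²(α_C−1)² ᾱ) < 0, and S̄_C(q) → K as q → ∞. -/
/-- The call exercise boundary S̄_C(q) = α_C(q)K/(α_C(q)−1) is strictly
decreasing in q with ∂S̄_C/∂q = −K/(σ²(α_C−1)² ᾱ) < 0, and S̄_C(q) → K as q → ∞. -/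
theorem ampo_call_boundary_decreasing (r σ q K : ℝ) (hr : 0 ≤ r) (hσ : 0 < σ) (hq : 0 < q)
    (hK : 0 < K)
    (αC : ℝ → ℝ)
    (hαC : ∀ q' : ℝ, αC q' =
      Real.sqrt ((r / σ ^ 2 + 1 / 2) ^ 2 + 2 * (r + q') / σ ^ 2) - r / σ ^ 2 + 1 / 2)
    (ᾱ : ℝ) (hᾱ : ᾱ = Real.sqrt ((r / σ ^ 2 + 1 / 2) ^ 2 + 2 * (r + q) / σ ^ 2))
    (SC : ℝ → ℝ) (hSC : ∀ q' : ℝ, SC q' = αC q' * K / (αC q' - 1)) :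
    HasDerivAt SC (-K / (σ ^ 2 * (αC q - 1) ^ 2 * ᾱ)) q ∧
      -K / (σ ^ 2 * (αC q - 1) ^ 2 * ᾱ) < 0 ∧
      StrictAntiOn SC (Set.Ioi 0) ∧
      Filter.Tendsto SC Filter.atTop (nhds K) := by
  have hσ2 : (0:ℝ) < σ ^ 2 := by positivity
  set g : ℝ → ℝ := fun q' => (r / σ ^ 2 + 1 / 2) ^ 2 + 2 * (r + q') / σ ^ 2 with hg
  -- αC q' > 1 for q' > 0
  have hα1 : ∀ q' : ℝ, 0 < q' → 1 < αC q' := by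
    intro q' hq'
    have hx : (0:ℝ) ≤ r / σ ^ 2 + 1 / 2 := by positivity
    have hlt : (r / σ ^ 2 + 1 / 2) ^ 2 < g q' := by
      have : 0 < 2 * (r + q') / σ ^ 2 := by positivity
      simp only [hg]; linarith
    have hs : r / σ ^ 2 + 1 / 2 < Real.sqrt (g q') := (Real.lt_sqrt hx).2 hlt
    rw [hαC]; simp only [hg] at hs; linarith
  -- αC strictly increasing on positives
  have hαmono : ∀ a b : ℝ, 0 < a → a < b → αC a < αC b := by
    intro a b ha hab
    have h0 : 0 ≤ g a := by positivity
    have hlt : g a < g b := by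
      simp only [hg]
      gcongr
    have := Real.sqrt_lt_sqrt h0 hlt
    rw [hαC, hαC]; simp only [hg] at this; linarith
  -- derivative of αC at any q' > 0
  have hαderiv : ∀ q' : ℝ, 0 < q' →
      HasDerivAt αC (1 / (σ ^ 2 * Real.sqrt (g q'))) q' := by
    intro q' hq'
    have hgq : 0 < g q' := by positivity
    have hgd : HasDerivAt g (2 / σ ^ 2) q' := by
      have h1 : HasDerivAt (fun x : ℝ => 2 * (r + x) / σ ^ 2) (2 / σ ^ 2) q' := by
        have := (((hasDerivAt_id q').const_add r).const_mul 2).div_const (σ ^ 2)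
        simpa using this
      simpa [hg] using h1.const_add ((r / σ ^ 2 + 1 / 2) ^ 2)
    have hs := (hgd.sqrt (ne_of_gt hgq)).sub_const (r / σ ^ 2)
    have hs2 := hs.add_const (1 / 2)
    have hfun : αC = fun q' => Real.sqrt (g q') - r / σ ^ 2 + 1 / 2 := funext fun x => hαC x
    rw [hfun]
    convert hs2 using 1
    · rfl
    · rfl
    have hsq : 0 < Real.sqrt (g q') := Real.sqrt_pos.2 hgq
    field_simp
  have hᾱpos : 0 < ᾱ := by
    rw [hᾱ]
    exact Real.sqrt_pos.2 (by positivity)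
  have hᾱg : ᾱ = Real.sqrt (g q) := by rw [hᾱ]
  -- derivative of SC at any q' > 0
  have hSCderiv : ∀ q' : ℝ, 0 < q' →
      HasDerivAt SC (-K / (σ ^ 2 * (αC q' - 1) ^ 2 * Real.sqrt (g q'))) q' := by
    intro q' hq'
    have hgq : 0 < g q' := by positivity
    have hsq : 0 < Real.sqrt (g q') := Real.sqrt_pos.2 hgq
    have hα := hα1 q' hq'
    have hvne : αC q' - 1 ≠ 0 := by linarith
    have hu : HasDerivAt (fun x => αC x * K) (1 / (σ ^ 2 * Real.sqrt (g q')) * K) q' :=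
      (hαderiv q' hq').mul_const K
    have hv : HasDerivAt (fun x => αC x - 1) (1 / (σ ^ 2 * Real.sqrt (g q'))) q' :=
      (hαderiv q' hq').sub_const 1
    have hd := hu.div hv hvne
    have hfun : SC = fun x => αC x * K / (αC x - 1) := funext fun x => hSC x
    rw [hfun]
    convert hd using 1
    · rfl
    · rfl
    · rfl
    field_simp
    ring
  have hDq : HasDerivAt SC (-K / (σ ^ 2 * (αC q - 1) ^ 2 * ᾱ)) q := by
    rw [hᾱg]; exact hSCderiv q hq
  have hαq := hα1 q hq
  have hneg : -K / (σ ^ 2 * (αC q - 1) ^ 2 * ᾱ) < 0 := by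
    apply div_neg_of_neg_of_pos (by linarith)
    have h2 : 0 < (αC q - 1) ^ 2 := pow_pos (by linarith) 2
    exact mul_pos (mul_pos hσ2 h2) hᾱpos
  refine ⟨hDq, hneg, ?_, ?_⟩
  · -- strict anti on Ioi 0
    intro a ha b hb hab
    simp only [Set.mem_Ioi] at ha hb
    have h1a := hα1 a ha
    have h1b := hα1 b (lt_trans ha hab)
    have hmono := hαmono a b ha hab
    rw [hSC a, hSC b]
    rw [div_lt_div_iff₀ (by linarith) (by linarith)]
    nlinarith
  · -- limit
    have hαtop : Filter.Tendsto αC Filter.atTop Filter.atTop := by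
      have hfun : αC = fun q' => Real.sqrt (g q') - r / σ ^ 2 + 1 / 2 := funext fun x => hαC x
      rw [hfun]
      have hsqrt_top : Filter.Tendsto Real.sqrt Filter.atTop Filter.atTop := by
        apply Filter.tendsto_atTop_atTop.2
        intro b
        refine ⟨b ^ 2, fun a ha => ?_⟩
        calc b ≤ Real.sqrt (b ^ 2) := by
                  rw [Real.sqrt_sq_eq_abs]; exact le_abs_self b
          _ ≤ Real.sqrt a := Real.sqrt_le_sqrt ha
      have hgt : Filter.Tendsto g Filter.atTop Filter.atTop := by
        apply Filter.tendsto_atTop_add_const_left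
        apply Filter.Tendsto.atTop_div_const hσ2
        apply Filter.Tendsto.const_mul_atTop (by norm_num : (0:ℝ) < 2)
        exact Filter.tendsto_atTop_add_const_left _ r Filter.tendsto_id
      have h1 : Filter.Tendsto (fun q' => Real.sqrt (g q') - r / σ ^ 2)
          Filter.atTop Filter.atTop := by
        simp only [sub_eq_add_neg]
        exact Filter.tendsto_atTop_add_const_right _ _ (hsqrt_top.comp hgt)
      exact Filter.tendsto_atTop_add_const_right _ _ h1
    have h1 : Filter.Tendsto (fun q' => αC q' - 1) Filter.atTop Filter.atTop := by
      simp only [sub_eq_add_neg]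
      exact Filter.tendsto_atTop_add_const_right _ _ hαtop
    have h2 : Filter.Tendsto (fun q' => K / (αC q' - 1)) Filter.atTop (nhds 0) := by
      have := (tendsto_inv_atTop_zero.comp h1).const_mul K
      simpa [div_eq_mul_inv, Function.comp] using this
    have h3 : Filter.Tendsto (fun q' => K + K / (αC q' - 1)) Filter.atTop (nhds K) := by
      simpa using tendsto_const_nhds.add h2
    apply h3.congr'
    filter_upwards [hαtop.eventually_gt_atTop 1] with x hx
    have hne : αC x - 1 ≠ 0 := by linarith
    rw [hSC x]
    field_simp
    ring
end

section
/- The put exercise boundary S̄_P(q) = α_P(q)K/(1+α_P(q)) is strictly increasing in q with derivative ∂S̄_P/∂q = K/(σ²(1+α_P)² ᾱ) > 0, and S̄_P(q) → K as q → ∞. -/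
/-- The put exercise boundary S̄_P(q) = α_P(q)K/(1+α_P(q)) is strictly
increasing in q with ∂S̄_P/∂q = K/(σ²(1+α_P)² ᾱ) > 0, and S̄_P(q) → K as q → ∞. -/
theorem ampo_put_boundary_increasing (r σ q K : ℝ) (hr : 0 ≤ r) (hσ : 0 < σ) (hq : 0 < q)
    (hK : 0 < K)
    (αP : ℝ → ℝ)
    (hαP : ∀ q' : ℝ, αP q' =
      Real.sqrt ((r / σ ^ 2 + 1 / 2) ^ 2 + 2 * (r + q') / σ ^ 2) + r / σ ^ 2 - 1 / 2)
    (ᾱ : ℝ) (hᾱ : ᾱ = Real.sqrt ((r / σ ^ 2 + 1 / 2) ^ 2 + 2 * (r + q) / σ ^ 2))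
    (SP : ℝ → ℝ) (hSP : ∀ q' : ℝ, SP q' = αP q' * K / (1 + αP q')) :
    HasDerivAt SP (K / (σ ^ 2 * (1 + αP q) ^ 2 * ᾱ)) q ∧
      0 < K / (σ ^ 2 * (1 + αP q) ^ 2 * ᾱ) ∧
      StrictMonoOn SP (Set.Ioi 0) ∧
      Filter.Tendsto SP Filter.atTop (nhds K) := by
  have hσ2 : (0:ℝ) < σ ^ 2 := by positivity
  set g : ℝ → ℝ := fun y => (r / σ ^ 2 + 1 / 2) ^ 2 + 2 * (r + y) / σ ^ 2 with hgdef
  have hg : ∀ x : ℝ, 0 ≤ x → 0 < g x := by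
    intro x hx
    have h1 : 0 < (r / σ ^ 2 + 1 / 2) ^ 2 := by positivity
    have h2 : 0 ≤ 2 * (r + x) / σ ^ 2 := by positivity
    simp only [hgdef]; linarith
  have hpos1 : ∀ x : ℝ, 0 < 1 + αP x := by
    intro x
    rw [hαP x]
    have := Real.sqrt_nonneg ((r / σ ^ 2 + 1 / 2) ^ 2 + 2 * (r + x) / σ ^ 2)
    have : 0 ≤ r / σ ^ 2 := by positivity
    nlinarith [Real.sqrt_nonneg ((r / σ ^ 2 + 1 / 2) ^ 2 + 2 * (r + x) / σ ^ 2)]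
  have hαfun : αP = fun y => Real.sqrt (g y) + (r / σ ^ 2 - 1 / 2) := by
    funext y; rw [hαP y]; ring
  have hSPfun : SP = fun y => αP y * K / (1 + αP y) := funext hSP
  have hderiv : ∀ x : ℝ, 0 ≤ x →
      HasDerivAt SP (K / (σ ^ 2 * (1 + αP x) ^ 2 * Real.sqrt (g x))) x := by
    intro x hx
    have hgx := hg x hx
    have hs : 0 < Real.sqrt (g x) := Real.sqrt_pos.mpr hgx
    have hg' : HasDerivAt g (2 / σ ^ 2) x := by
      have h1 : HasDerivAt (fun y : ℝ => 2 * (r + y) / σ ^ 2) (2 / σ ^ 2) x := by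
        have := (((hasDerivAt_id x).const_add r).const_mul 2).div_const (σ ^ 2)
        simpa using this
      exact h1.const_add ((r / σ ^ 2 + 1 / 2) ^ 2)
    have hsq : HasDerivAt (fun y => Real.sqrt (g y))
        (1 / (2 * Real.sqrt (g x)) * (2 / σ ^ 2)) x :=
      (Real.hasDerivAt_sqrt (ne_of_gt hgx)).comp x hg'
    have hα : HasDerivAt αP (1 / (σ ^ 2 * Real.sqrt (g x))) x := by
      rw [hαfun]
      convert hsq.add_const (r / σ ^ 2 - 1 / 2) using 1
      case e'_9 => field_simp
      all_goals rfl
    have hden : (1 + αP x) ≠ 0 := ne_of_gt (hpos1 x)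
    have hd := (hα.mul_const K).div (hα.const_add 1) hden
    rw [hSPfun]
    convert hd using 1
    case e'_9 =>
      field_simp
      ring
    all_goals rfl
  have hᾱ' : Real.sqrt (g q) = ᾱ := by rw [hᾱ]
  refine ⟨?_, ?_, ?_, ?_⟩
  · have := hderiv q hq.le; rwa [hᾱ'] at this
  · rw [← hᾱ']
    have hs : 0 < Real.sqrt (g q) := Real.sqrt_pos.mpr (hg q hq.le)
    have := hpos1 q
    positivity
  · apply StrictMonoOn.mono (s := Set.Ici 0) ?_ Set.Ioi_subset_Ici_self
    apply strictMonoOn_of_deriv_pos (convex_Ici 0)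
    · intro x hx
      exact ((hderiv x hx).continuousAt).continuousWithinAt
    · intro x hx
      rw [interior_Ici] at hx
      rw [(hderiv x (le_of_lt hx)).deriv]
      have hs : 0 < Real.sqrt (g x) := Real.sqrt_pos.mpr (hg x (le_of_lt hx))
      have := hpos1 x
      positivity
  · have hrw : SP = fun y => K - K / (1 + αP y) := by
      funext y
      rw [hSP y]
      have hne := (hpos1 y).ne'
      field_simp
      ring
    rw [hrw]
    have hgt : Filter.Tendsto g Filter.atTop Filter.atTop := by
      apply Filter.tendsto_atTop_add_const_left
      apply Filter.Tendsto.atTop_div_const hσ2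
      apply Filter.Tendsto.const_mul_atTop two_pos
      exact Filter.tendsto_atTop_add_const_left _ r Filter.tendsto_id
    have htop : Filter.Tendsto (fun y => 1 + αP y) Filter.atTop Filter.atTop := by
      have heq : (fun y => 1 + αP y) = fun y => Real.sqrt (g y) + (r / σ ^ 2 + 1 / 2) := by
        funext y; rw [hαP y]; ring
      rw [heq]
      have hsqt : Filter.Tendsto Real.sqrt Filter.atTop Filter.atTop := by
        apply Filter.tendsto_atTop_atTop.mpr
        intro b
        refine ⟨max 0 b ^ 2, fun a ha => ?_⟩
        calc b ≤ max 0 b := le_max_right 0 b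
          _ = Real.sqrt (max 0 b ^ 2) := (Real.sqrt_sq (le_max_left 0 b)).symm
          _ ≤ Real.sqrt a := Real.sqrt_le_sqrt ha
      exact Filter.tendsto_atTop_add_const_right _ _ (hsqt.comp hgt)
    have h0 : Filter.Tendsto (fun y => K / (1 + αP y)) Filter.atTop (nhds 0) :=
      Filter.Tendsto.div_atTop tendsto_const_nhds htop
    have := (tendsto_const_nhds (x := K) (f := Filter.atTop)).sub h0
    simpa using this
end

section
/- The map σ ↦ α_C (with r ≥ 0, q > 0 fixed) is strictly decreasing on (0, ∞): ∂α_C/∂σ = (1/σ³)[2r − (2r² + σ²(3r+2q))/(σ² ᾱ)] < 0, where ᾱ = sqrt((r/σ² + 1/2)² + 2(r+q)/σ²). -/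
lemma ampo_key (r q : ℝ) (hr : 0 ≤ r) (hq : 0 < q) (σ : ℝ) (hσ : 0 < σ) :
    HasDerivAt
      (fun σ' : ℝ =>
        Real.sqrt ((r / σ' ^ 2 + 1 / 2) ^ 2 + 2 * (r + q) / σ' ^ 2) - r / σ' ^ 2 + 1 / 2)
      (1 / σ ^ 3 * (2 * r - (2 * r ^ 2 + σ ^ 2 * (3 * r + 2 * q)) /
        (σ ^ 2 * Real.sqrt ((r / σ ^ 2 + 1 / 2) ^ 2 + 2 * (r + q) / σ ^ 2)))) σ ∧
    1 / σ ^ 3 * (2 * r - (2 * r ^ 2 + σ ^ 2 * (3 * r + 2 * q)) /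
        (σ ^ 2 * Real.sqrt ((r / σ ^ 2 + 1 / 2) ^ 2 + 2 * (r + q) / σ ^ 2))) < 0 := by
  have hσ2 : (σ : ℝ) ^ 2 ≠ 0 := by positivity
  set u : ℝ := (r / σ ^ 2 + 1 / 2) ^ 2 + 2 * (r + q) / σ ^ 2 with hu
  have hupos : 0 < u := by
    rw [hu]
    have h5 : 0 < 2 * (r + q) / σ ^ 2 :=
      div_pos (by linarith) (by positivity)
    nlinarith [sq_nonneg (r / σ ^ 2 + 1 / 2)]
  set A : ℝ := Real.sqrt u with hA
  have hApos : 0 < A := Real.sqrt_pos.mpr hupos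
  have hA2 : A ^ 2 = u := Real.sq_sqrt hupos.le
  -- derivative of inner function
  have hinv : HasDerivAt (fun s : ℝ => (s ^ 2)⁻¹) (-(2 * σ) / (σ ^ 2) ^ 2) σ := by
    have h1 : HasDerivAt (fun s : ℝ => s ^ 2) (2 * σ) σ := by
      simpa using hasDerivAt_pow 2 σ
    exact h1.inv hσ2
  have hU : HasDerivAt (fun s : ℝ => (r / s ^ 2 + 1 / 2) ^ 2 + 2 * (r + q) / s ^ 2)
      (2 * (r / σ ^ 2 + 1 / 2) * (r * (-(2 * σ) / (σ ^ 2) ^ 2))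
        + 2 * (r + q) * (-(2 * σ) / (σ ^ 2) ^ 2)) σ := by
    have h2 : HasDerivAt (fun s : ℝ => r / s ^ 2 + 1 / 2)
        (r * (-(2 * σ) / (σ ^ 2) ^ 2)) σ := by
      simpa [div_eq_mul_inv] using (hinv.const_mul r).add_const (1 / 2)
    have h3 := (h2.pow 2)
    have h4 : HasDerivAt (fun s : ℝ => 2 * (r + q) / s ^ 2)
        (2 * (r + q) * (-(2 * σ) / (σ ^ 2) ^ 2)) σ := by
      simpa [div_eq_mul_inv] using hinv.const_mul (2 * (r + q))
    have := h3.add h4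
    have h5 : HasDerivAt (fun s : ℝ => (r / s ^ 2 + 1 / 2) ^ 2 + 2 * (r + q) / s ^ 2) _ σ := this
    simpa [mul_comm, mul_assoc, mul_left_comm] using h5
  have hsqrt := (Real.hasDerivAt_sqrt hupos.ne').comp σ hU
  have hrs : HasDerivAt (fun s : ℝ => r / s ^ 2) (r * (-(2 * σ) / (σ ^ 2) ^ 2)) σ := by
    simpa [div_eq_mul_inv] using hinv.const_mul r
  have hf := ((hsqrt.sub hrs).add_const (1 / 2 : ℝ))
  constructor
  · convert hf using 1
    have hAne : A ≠ 0 := hApos.ne'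
    have hσne : σ ≠ 0 := hσ.ne'
    show (1 : ℝ) / σ ^ 3 * (2 * r - (2 * r ^ 2 + σ ^ 2 * (3 * r + 2 * q)) / (σ ^ 2 * A))
      = 1 / (2 * Real.sqrt u) * (2 * (r / σ ^ 2 + 1 / 2) * (r * (-(2 * σ) / (σ ^ 2) ^ 2))
        + 2 * (r + q) * (-(2 * σ) / (σ ^ 2) ^ 2)) - r * (-(2 * σ) / (σ ^ 2) ^ 2)
    rw [← hA]
    field_simp
    ring
    all_goals rfl
  · have hσ2A : 0 < σ ^ 2 * A := by positivity
    have hC : 0 < 2 * r ^ 2 + σ ^ 2 * (3 * r + 2 * q) := by nlinarith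
    have hkey : 2 * r * (σ ^ 2 * A) < 2 * r ^ 2 + σ ^ 2 * (3 * r + 2 * q) := by
      have hB2 : (σ ^ 2 * A) ^ 2 = (r + σ ^ 2 / 2) ^ 2 + 2 * σ ^ 2 * (r + q) := by
        have : (σ ^ 2 * A) ^ 2 = σ ^ 4 * u := by rw [mul_pow, hA2]; ring
        rw [this, hu]; field_simp
      by_contra hcon
      push_neg at hcon
      have h6 : (2 * r ^ 2 + σ ^ 2 * (3 * r + 2 * q)) * (2 * r ^ 2 + σ ^ 2 * (3 * r + 2 * q))
          ≤ (2 * r * (σ ^ 2 * A)) * (2 * r * (σ ^ 2 * A)) :=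
        mul_le_mul hcon hcon hC.le (by positivity)
      nlinarith [hB2, h6, sq_nonneg r,
        mul_pos (pow_pos hσ 4) (mul_pos hq hq),
        mul_nonneg (pow_pos hσ 4).le (mul_nonneg hr hr),
        mul_nonneg (mul_nonneg (pow_pos hσ 4).le hr) hq.le]
    have h2 : 2 * r - (2 * r ^ 2 + σ ^ 2 * (3 * r + 2 * q)) / (σ ^ 2 * A) < 0 := by
      rw [sub_neg, lt_div_iff₀ hσ2A]
      linarith
    have h3 : 0 < 1 / σ ^ 3 := by positivity
    exact mul_neg_of_pos_of_neg h3 h2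

/-- The map σ ↦ α_C (r ≥ 0, q > 0 fixed) is strictly decreasing on (0, ∞):
∂α_C/∂σ = (1/σ³)[2r − (2r² + σ²(3r+2q))/(σ² ᾱ)] < 0,
where ᾱ = sqrt((r/σ² + 1/2)² + 2(r+q)/σ²). -/
theorem ampo_alphaC_decreasing_in_sigma (r q σ : ℝ) (hr : 0 ≤ r) (hq : 0 < q) (hσ : 0 < σ)
    (ᾱ : ℝ) (hᾱ : ᾱ = Real.sqrt ((r / σ ^ 2 + 1 / 2) ^ 2 + 2 * (r + q) / σ ^ 2)) :
    StrictAntiOn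
      (fun σ' : ℝ =>
        Real.sqrt ((r / σ' ^ 2 + 1 / 2) ^ 2 + 2 * (r + q) / σ' ^ 2) - r / σ' ^ 2 + 1 / 2)
      (Set.Ioi 0) ∧
    HasDerivAt
      (fun σ' : ℝ =>
        Real.sqrt ((r / σ' ^ 2 + 1 / 2) ^ 2 + 2 * (r + q) / σ' ^ 2) - r / σ' ^ 2 + 1 / 2)
      (1 / σ ^ 3 * (2 * r - (2 * r ^ 2 + σ ^ 2 * (3 * r + 2 * q)) / (σ ^ 2 * ᾱ))) σ ∧
    1 / σ ^ 3 * (2 * r - (2 * r ^ 2 + σ ^ 2 * (3 * r + 2 * q)) / (σ ^ 2 * ᾱ)) < 0 := by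
  subst hᾱ
  refine ⟨?_, (ampo_key r q hr hq σ hσ).1, (ampo_key r q hr hq σ hσ).2⟩
  apply strictAntiOn_of_deriv_neg (convex_Ioi 0)
  · intro x hx
    exact ((ampo_key r q hr hq x hx).1.continuousAt).continuousWithinAt
  · intro x hx
    rw [interior_Ioi] at hx
    rw [(ampo_key r q hr hq x hx).1.deriv]
    exact (ampo_key r q hr hq x hx).2
end

section
/- The map σ ↦ α_P (with r ≥ 0, q > 0 fixed) is strictly decreasing on (0, ∞): ∂α_P/∂σ = −(1/σ³)[2r + (2r² + σ²(3r+2q))/(σ² ᾱ)] < 0, where ᾱ = sqrt((r/σ² + 1/2)² + 2(r+q)/σ²). -/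
lemma ampo_aux_deriv (r q : ℝ) {x : ℝ} (hx : 0 < x) (hrq : 0 < r + q) :
    HasDerivAt
      (fun σ' : ℝ =>
        Real.sqrt ((r / σ' ^ 2 + 1 / 2) ^ 2 + 2 * (r + q) / σ' ^ 2) + r / σ' ^ 2 - 1 / 2)
      (-(1 / x ^ 3) * (2 * r + (2 * r ^ 2 + x ^ 2 * (3 * r + 2 * q)) /
        (x ^ 2 * Real.sqrt ((r / x ^ 2 + 1 / 2) ^ 2 + 2 * (r + q) / x ^ 2)))) x := by
  have hx0 : x ≠ 0 := hx.ne'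
  have hx2 : x ^ 2 ≠ 0 := pow_ne_zero _ hx0
  have hgpos : 0 < (r / x ^ 2 + 1 / 2) ^ 2 + 2 * (r + q) / x ^ 2 :=
    add_pos_of_nonneg_of_pos (sq_nonneg _) (div_pos (by linarith) (by positivity))
  set S := Real.sqrt ((r / x ^ 2 + 1 / 2) ^ 2 + 2 * (r + q) / x ^ 2) with hS
  have hSpos : 0 < S := Real.sqrt_pos.2 hgpos
  have hSsq : S ^ 2 = (r / x ^ 2 + 1 / 2) ^ 2 + 2 * (r + q) / x ^ 2 := Real.sq_sqrt hgpos.le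
  have hs2 : HasDerivAt (fun s : ℝ => s ^ 2) (2 * x) x := by
    simpa using hasDerivAt_pow 2 x
  have hA : HasDerivAt (fun s : ℝ => r / s ^ 2)
      ((0 * x ^ 2 - r * (2 * x)) / (x ^ 2) ^ 2) x :=
    (hasDerivAt_const x r).div hs2 hx2
  have hD : HasDerivAt (fun s : ℝ => 2 * (r + q) / s ^ 2)
      ((0 * x ^ 2 - 2 * (r + q) * (2 * x)) / (x ^ 2) ^ 2) x :=
    (hasDerivAt_const x (2 * (r + q))).div hs2 hx2
  have hC := ((hA.add_const (1 / 2)).pow 2).add hD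
  have hne : (r / x ^ 2 + 1 / 2) ^ 2 + 2 * (r + q) / x ^ 2 ≠ 0 := hgpos.ne'
  have hsqrt := (Real.hasDerivAt_sqrt hne).comp x hC
  have hF := (hsqrt.add hA).sub_const (1 / 2)
  refine hF.congr_deriv ?_
  rw [← hS]
  simp only [Nat.cast_ofNat, Nat.reduceSub, pow_one]
  field_simp
  nlinarith [hSsq, sq_nonneg S, sq_nonneg x, mul_pos hSpos (pow_pos hx 2)]

lemma ampo_aux_neg (r q : ℝ) (hr : 0 ≤ r) (hq : 0 < q) {x : ℝ} (hx : 0 < x) :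
    -(1 / x ^ 3) * (2 * r + (2 * r ^ 2 + x ^ 2 * (3 * r + 2 * q)) /
      (x ^ 2 * Real.sqrt ((r / x ^ 2 + 1 / 2) ^ 2 + 2 * (r + q) / x ^ 2))) < 0 := by
  have hgpos : 0 < (r / x ^ 2 + 1 / 2) ^ 2 + 2 * (r + q) / x ^ 2 :=
    add_pos_of_nonneg_of_pos (sq_nonneg _) (div_pos (by linarith) (by positivity))
  have hSpos : 0 < Real.sqrt ((r / x ^ 2 + 1 / 2) ^ 2 + 2 * (r + q) / x ^ 2) :=
    Real.sqrt_pos.2 hgpos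
  have h1 : 0 < 2 * r + (2 * r ^ 2 + x ^ 2 * (3 * r + 2 * q)) /
      (x ^ 2 * Real.sqrt ((r / x ^ 2 + 1 / 2) ^ 2 + 2 * (r + q) / x ^ 2)) := by
    have : 0 < (2 * r ^ 2 + x ^ 2 * (3 * r + 2 * q)) /
        (x ^ 2 * Real.sqrt ((r / x ^ 2 + 1 / 2) ^ 2 + 2 * (r + q) / x ^ 2)) := by
      apply div_pos (by nlinarith [sq_nonneg r, pow_pos hx 2]) (by positivity)
    linarith
  have h2 : -(1 / x ^ 3) < 0 := by
    have : 0 < 1 / x ^ 3 := by positivity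
    linarith
  exact mul_neg_of_neg_of_pos h2 h1

/-- The map σ ↦ α_P (r ≥ 0, q > 0 fixed) is strictly decreasing on (0, ∞):
∂α_P/∂σ = −(1/σ³)[2r + (2r² + σ²(3r+2q))/(σ² ᾱ)] < 0,
where ᾱ = sqrt((r/σ² + 1/2)² + 2(r+q)/σ²). -/
theorem ampo_alphaP_decreasing_in_sigma (r q σ : ℝ) (hr : 0 ≤ r) (hq : 0 < q) (hσ : 0 < σ)
    (ᾱ : ℝ) (hᾱ : ᾱ = Real.sqrt ((r / σ ^ 2 + 1 / 2) ^ 2 + 2 * (r + q) / σ ^ 2)) :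
    StrictAntiOn
      (fun σ' : ℝ =>
        Real.sqrt ((r / σ' ^ 2 + 1 / 2) ^ 2 + 2 * (r + q) / σ' ^ 2) + r / σ' ^ 2 - 1 / 2)
      (Set.Ioi 0) ∧
    HasDerivAt
      (fun σ' : ℝ =>
        Real.sqrt ((r / σ' ^ 2 + 1 / 2) ^ 2 + 2 * (r + q) / σ' ^ 2) + r / σ' ^ 2 - 1 / 2)
      (-(1 / σ ^ 3) * (2 * r + (2 * r ^ 2 + σ ^ 2 * (3 * r + 2 * q)) / (σ ^ 2 * ᾱ))) σ ∧
    -(1 / σ ^ 3) * (2 * r + (2 * r ^ 2 + σ ^ 2 * (3 * r + 2 * q)) / (σ ^ 2 * ᾱ)) < 0 := by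
  have hrq : 0 < r + q := by linarith
  refine ⟨?_, hᾱ ▸ ampo_aux_deriv r q hσ hrq, hᾱ ▸ ampo_aux_neg r q hr hq hσ⟩
  apply strictAntiOn_of_deriv_neg (convex_Ioi 0)
  · exact fun x hx =>
      ((ampo_aux_deriv r q (Set.mem_Ioi.mp hx) hrq).differentiableAt).continuousAt.continuousWithinAt
  · intro x hx
    rw [interior_Ioi] at hx
    rw [(ampo_aux_deriv r q (Set.mem_Ioi.mp hx) hrq).deriv]
    exact ampo_aux_neg r q hr hq (Set.mem_Ioi.mp hx)
end
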